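/- arXiv:1104.1592 — 2 statements merged into one kernel-verified Lean document; each statement's English description precedes it below -/
import Mathlib

section
/- If R: Q_1 → ℝ is a grading on the arrows of a dimer model Q on a compact surface such that for every cycle c in Q_2 the sum of R_a over arrows a in c equals 2, and for every vertex v the sum of (1 - R_a) over all arrows with head v plus the sum of (1 - R_a) over all arrows with tail v equals 2, then the Euler characteristic χ_Q = #Q_0 - #Q_1 + #Q_2 equals 0. -/
open scoped BigOperators

attribute [local instance] Classical.propDecidable

noncomputable section

/-- The underlying data of a (possibly infinite) dimer model: a quiver together with
two distinguished collections of cyclic paths (the positive and negative faces).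
Lists of arrows are written in *algebra order*: `[a₁, …, aₖ]` represents the path
`a₁ ⋯ aₖ`, traversing `aₖ` first; so consecutive arrows satisfy `tl aᵢ = hd aᵢ₊₁`. -/
structure DimerData where
  V : Type
  E : Type
  hd : E → V
  tl : E → V
  facesP : Set (List E)
  facesM : Set (List E)

namespace DimerData

variable (D : DimerData)

def faces : Set (List D.E) := D.facesP ∪ D.facesM

/-- `p` is a path (in algebra order). -/
def IsPath (p : List D.E) : Prop := p.Chain' fun a b => D.tl a = D.hd b

/-- `p` is a path with tail `v` and head `w`. -/
def PathFrom (v w : D.V) (p : List D.E) : Prop :=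
  D.IsPath p ∧ (∀ a ∈ p.head?, D.hd a = w) ∧ (∀ a ∈ p.getLast?, D.tl a = v) ∧
    (p = [] → v = w)

/-- `c` is a nonempty cyclic path. -/
def IsCyc (c : List D.E) : Prop :=
  D.IsPath c ∧ ∃ a ∈ c.head?, ∃ b ∈ c.getLast?, D.tl b = D.hd a

/-- `c` is a cyclic path based at the vertex `v`. -/
def CycAt (v : D.V) (c : List D.E) : Prop := D.IsCyc c ∧ ∀ a ∈ c.head?, D.hd a = v

/-- The axioms of a dimer model: the faces are cyclic paths of length at least 3,
the two sets of faces are disjoint, and every arrow occurs exactly once among the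
positive faces and exactly once among the negative faces (uniqueness of the
splitting `s.1 ++ a :: s.2` expresses "exactly once in exactly one cycle"). -/
structure IsDimer : Prop where
  facesP_cyc : ∀ c ∈ D.facesP, D.IsCyc c ∧ 3 ≤ c.length
  facesM_cyc : ∀ c ∈ D.facesM, D.IsCyc c ∧ 3 ≤ c.length
  disjoint : Disjoint D.facesP D.facesM
  arrowP : ∀ a : D.E, ∃! s : List D.E × List D.E, s.1 ++ a :: s.2 ∈ D.facesP
  arrowM : ∀ a : D.E, ∃! s : List D.E × List D.E, s.1 ++ a :: s.2 ∈ D.facesM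

/-- `p` is the positive complement of the arrow `a`: `a * p` is (a rotation of)
a positive face, i.e. `r_a = p⁺ - p⁻` has `p⁺ = p`. -/
def PosComp (a : D.E) (p : List D.E) : Prop := ∃ c ∈ D.facesP, (a :: p) ~r c

/-- `p` is the negative complement of the arrow `a`. -/
def NegComp (a : D.E) (p : List D.E) : Prop := ∃ c ∈ D.facesM, (a :: p) ~r c

/-- The Euler characteristic `#Q₀ - #Q₁ + #Q₂` of a dimer model. -/
def eulerChar : ℤ := (Nat.card D.V : ℤ) - Nat.card D.E + Nat.card ↥D.faces

/-- The homology 1-chain of a path: the multiplicity of each arrow. -/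
def chain (p : List D.E) : D.E → ℤ := fun a => (p.count a : ℤ)

/-- The span of the boundaries of the faces (the image of `d : ℤ^{Q₂} → ℤ^{Q₁}`). -/
def bd2span : Submodule ℤ (D.E → ℤ) :=
  Submodule.span ℤ {x | ∃ c ∈ D.faces, x = D.chain c}

/-- The number of arrows of a path lying in a given set of arrows (the degree of
the path for the grading induced by a perfect matching). -/
def pdeg (P : Set D.E) (p : List D.E) : ℕ := p.countP fun a => decide (a ∈ P)

/-- A perfect matching: a set of arrows meeting every face exactly once. -/
def IsPM (P : Set D.E) : Prop := ∀ c ∈ D.faces, D.pdeg P c = 1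

/-- Combinatorial homotopy of paths: the congruence generated by the Jacobi
relations `p⁺ ∼ p⁻` together with contracting any face cycle to a trivial path.
Two directed paths in the dimer model are homotopic in the underlying surface
iff they are related by this relation. -/
inductive Htp : List D.E → List D.E → Prop
  | refl (p) : Htp p p
  | symm {p q} : Htp p q → Htp q p
  | trans {p q r} : Htp p q → Htp q r → Htp p r
  | append {p p' q q'} : Htp p p' → Htp q q' → Htp (p ++ q) (p' ++ q')
  | jac {a p q} : D.PosComp a p → D.NegComp a q → Htp p q
  | face {c c'} : c ∈ D.faces → c' ~r c → Htp c' []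

section Fin

variable [Fintype D.E]

/-- The boundary map `ℤ^{Q₁} → ℤ^{Q₀}`, `a ↦ h(a) - t(a)`. -/
def bd1 (x : D.E → ℤ) : D.V → ℤ := fun v =>
  (∑ a : D.E, if D.hd a = v then x a else 0) - ∑ a : D.E, if D.tl a = v then x a else 0

/-- A consistent R-charge: positive, faces of total degree 2, and the vertex
condition `Σ_{h(a)=v} (1 - R_a) + Σ_{t(a)=v} (1 - R_a) = 2`. -/
def ConsistentR (R : D.E → ℝ) : Prop :=
  (∀ a : D.E, 0 < R a) ∧
  (∀ c ∈ D.faces, (c.map R).sum = 2) ∧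
  (∀ v : D.V,
    (∑ a : D.E, if D.hd a = v then 1 - R a else 0) +
      (∑ a : D.E, if D.tl a = v then 1 - R a else 0) = 2)

end Fin

/-! ### The Jacobi algebra -/

inductive Gen (D : DimerData) : Type
  | vert : D.V → Gen D
  | arr : D.E → Gen D

/-- The free algebra on the vertices and arrows. -/
abbrev pre := FreeAlgebra ℂ (Gen D)

def genV (v : D.V) : D.pre := FreeAlgebra.ι ℂ (Gen.vert v)
def genE (a : D.E) : D.pre := FreeAlgebra.ι ℂ (Gen.arr a)

/-- The element of the free algebra corresponding to a path (in algebra order). -/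
def word (p : List D.E) : D.pre := (p.map D.genE).prod

section Alg

variable [Fintype D.V]

/-- The defining relations of the path algebra `ℂQ`: the vertices are a complete
set of orthogonal idempotents and arrows compose according to heads and tails. -/
inductive PARel : D.pre → D.pre → Prop
  | vv (v : D.V) : PARel (D.genV v * D.genV v) (D.genV v)
  | vw (v w : D.V) (h : v ≠ w) : PARel (D.genV v * D.genV w) 0
  | unit : PARel (∑ v : D.V, D.genV v) 1
  | hd (a : D.E) : PARel (D.genV (D.hd a) * D.genE a) (D.genE a)
  | tl (a : D.E) : PARel (D.genE a * D.genV (D.tl a)) (D.genE a)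

/-- The relations of the Jacobi algebra: path algebra relations together with
the relations `r_a = p⁺ - p⁻` for every arrow `a`. -/
inductive JRel : D.pre → D.pre → Prop
  | pa {x y} : D.PARel x y → JRel x y
  | jac {a p q} : D.PosComp a p → D.NegComp a q → JRel (D.word p) (D.word q)

/-- The path algebra `ℂQ`. -/
abbrev PathAlg := RingQuot D.PARel

/-- The Jacobi algebra `A_Q` of the dimer model. -/
abbrev Jac := RingQuot D.JRel

def toJac : D.pre →+* D.Jac := RingQuot.mkRingHom D.JRel

/-- The element of the Jacobi algebra given by a (nonempty) path. -/
def pathE (p : List D.E) : D.Jac := D.toJac (D.word p)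

/-- The idempotent of a vertex in the Jacobi algebra. -/
def vtx (v : D.V) : D.Jac := D.toJac (D.genV v)

/-- The element of a possibly trivial path with tail vertex `v`. -/
def pathAt (v : D.V) (p : List D.E) : D.Jac := if p = [] then D.vtx v else D.pathE p

/-- `A_Q` is a cancellation algebra: `p a = q a → p = q` and `a p = a q → p = q`
for every arrow `a` and all paths `p`, `q` (with matching heads and tails). -/
def Cancellation : Prop :=
  ∀ (a : D.E) (p q : List D.E) (v : D.V),
    (D.PathFrom (D.hd a) v p → D.PathFrom (D.hd a) v q →
      D.pathAt (D.hd a) p * D.pathE [a] = D.pathAt (D.hd a) q * D.pathE [a] →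
      D.pathAt (D.hd a) p = D.pathAt (D.hd a) q) ∧
    (D.PathFrom v (D.tl a) p → D.PathFrom v (D.tl a) q →
      D.pathE [a] * D.pathAt v p = D.pathE [a] * D.pathAt v q →
      D.pathAt v p = D.pathAt v q)

/-- A choice, for every vertex, of a face cycle based at that vertex. -/
def CycChoice (c : D.V → List D.E) : Prop :=
  ∀ v : D.V, c v ∈ D.faces ∧ D.CycAt v (c v)

/-- The canonical central element `ℓ = Σ_v c_v` attached to a choice of cycles. -/
def ell (c : D.V → List D.E) : D.Jac := ∑ v : D.V, D.pathE (c v)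

end Alg

end DimerData

namespace DimerAux

/-- Uniqueness of splittings implies nodup. -/
lemma nodup_of_unique_split {E : Type} (S : Set (List E))
    (harr : ∀ a : E, ∃! s : List E × List E, s.1 ++ a :: s.2 ∈ S)
    {c : List E} (hc : c ∈ S) : c.Nodup := by
  rw [List.nodup_iff_injective_get]
  intro i j hij
  by_contra hne
  have hiv := i.isLt
  have hjv := j.isLt
  have key : ∀ k : Fin c.length, c.take k.1 ++ c.get k :: c.drop (k.1 + 1) = c := by
    intro k
    have := List.drop_eq_getElem_cons k.isLt
    rw [List.get_eq_getElem, ← this, List.take_append_drop]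
  set a := c.get i with ha
  have h1 : (c.take i.1, c.drop (i.1 + 1)).1 ++ a :: (c.take i.1, c.drop (i.1 + 1)).2 ∈ S := by
    show c.take i.1 ++ a :: c.drop (i.1 + 1) ∈ S
    rw [ha, key i]; exact hc
  have h2 : (c.take j.1, c.drop (j.1 + 1)).1 ++ a :: (c.take j.1, c.drop (j.1 + 1)).2 ∈ S := by
    have : c.take j.1 ++ c.get j :: c.drop (j.1 + 1) = c := key j
    rw [← hij] at this
    simpa [this] using hc
  have := (harr a).unique h1 h2
  have hlen : (c.take i.1).length = (c.take j.1).length := by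
    rw [Prod.ext_iff] at this
    exact congrArg List.length this.1
  simp [List.length_take, Nat.min_eq_left (le_of_lt hiv), Nat.min_eq_left (le_of_lt hjv)] at hlen
  exact hne (Fin.ext hlen)

/-- The core counting lemma: if every arrow occurs in exactly one face (with a
unique splitting), and every face has positive length and `R`-sum 2, then
`S` equals a finset `T` with `∑ R = 2 * T.card`. -/
lemma exists_finset {E : Type} [Fintype E] (S : Set (List E))
    (hlen : ∀ c ∈ S, 1 ≤ c.length)
    (harr : ∀ a : E, ∃! s : List E × List E, s.1 ++ a :: s.2 ∈ S)
    (R : E → ℝ) (hface : ∀ c ∈ S, (c.map R).sum = 2) :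
    ∃ T : Finset (List E), ↑T = S ∧ ∑ a : E, R a = 2 * T.card := by
  classical
  set F : E → List E := fun a =>
    (harr a).choose.1 ++ a :: (harr a).choose.2 with hF
  have hFS : ∀ a, F a ∈ S := fun a => (harr a).choose_spec.1
  have hFsplit : ∀ (a : E) (s t : List E), s ++ a :: t ∈ S → F a = s ++ a :: t := by
    intro a s t h
    have := (harr a).choose_spec.2 (s, t) h
    simp only [hF]
    rw [← this]
  refine ⟨Finset.univ.image F, ?_, ?_⟩
  · ext c
    simp only [Finset.coe_image, Finset.coe_univ, Set.image_univ, Set.mem_range]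
    constructor
    · rintro ⟨a, rfl⟩; exact hFS a
    · intro hc
      obtain ⟨a, t, rfl⟩ : ∃ a t, c = a :: t := by
        cases c with
        | nil => simpa using hlen [] hc
        | cons a t => exact ⟨a, t, rfl⟩
      exact ⟨a, hFsplit a [] t hc⟩
  · have hfiber : ∀ c ∈ Finset.univ.image F,
        (Finset.univ.filter fun a => F a = c) = c.toFinset := by
      intro c hc
      obtain ⟨a₀, -, rfl⟩ := Finset.mem_image.mp hc
      ext a
      simp only [Finset.mem_filter, Finset.mem_univ, true_and, List.mem_toFinset]
      constructor
      · intro h; rw [← h, hF]; simp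
      · intro h
        obtain ⟨s, t, hst⟩ := List.append_of_mem h
        rw [hst, hFsplit a s t (hst ▸ hFS a₀)]
    have := Finset.sum_fiberwise_of_maps_to (s := Finset.univ) (g := F)
      (fun a _ => Finset.mem_image_of_mem F (Finset.mem_univ a)) R
    rw [← this]
    rw [Finset.sum_congr rfl fun c hc => ?_]
    · rw [Finset.sum_const, nsmul_eq_mul, mul_comm]
    · rw [hfiber c hc, List.sum_toFinset R
        (nodup_of_unique_split S harr (by
          obtain ⟨a₀, -, rfl⟩ := Finset.mem_image.mp hc; exact hFS a₀)),
        hface c (by obtain ⟨a₀, -, rfl⟩ := Finset.mem_image.mp hc; exact hFS a₀)]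

end DimerAux

open DimerData in
/-- If a dimer model on a compact surface carries a grading
`R : Q₁ → ℝ` with all faces of total degree `2` and satisfying the vertex
condition, then its Euler characteristic `#Q₀ - #Q₁ + #Q₂` vanishes. -/
theorem euler_char_eq_zero_of_R_charge (D : DimerData) [Fintype D.V] [Fintype D.E]
    (hD : D.IsDimer) (R : D.E → ℝ)
    (hface : ∀ c ∈ D.faces, (c.map R).sum = 2)
    (hvert : ∀ v : D.V,
      (∑ a : D.E, if D.hd a = v then 1 - R a else 0) +
        (∑ a : D.E, if D.tl a = v then 1 - R a else 0) = 2) :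
    D.eulerChar = 0 := by
  classical
  have hPsub : D.facesP ⊆ D.faces := Set.subset_union_left
  have hMsub : D.facesM ⊆ D.faces := Set.subset_union_right
  obtain ⟨TP, hTP, hsumP⟩ := DimerAux.exists_finset D.facesP
    (fun c hc => le_trans (by norm_num) (hD.facesP_cyc c hc).2)
    hD.arrowP R (fun c hc => hface c (hPsub hc))
  obtain ⟨TM, hTM, hsumM⟩ := DimerAux.exists_finset D.facesM
    (fun c hc => le_trans (by norm_num) (hD.facesM_cyc c hc).2)
    hD.arrowM R (fun c hc => hface c (hMsub hc))
  have hdisj : Disjoint TP TM := by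
    rw [← Finset.disjoint_coe, hTP, hTM]; exact hD.disjoint
  have hfaces : D.faces = ↑(TP ∪ TM) := by
    rw [Finset.coe_union, hTP, hTM]; rfl
  have hcardfaces : Nat.card ↥D.faces = TP.card + TM.card := by
    rw [hfaces, Nat.card_coe_set_eq, Set.ncard_coe_finset,
      Finset.card_union_of_disjoint hdisj]
  -- vertex condition summed over all vertices
  have hvsum : (2 : ℝ) * Nat.card D.V = 2 * Nat.card D.E - 2 * ∑ a : D.E, R a := by
    have h1 : ∑ v : D.V, ((∑ a : D.E, if D.hd a = v then 1 - R a else 0) +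
        (∑ a : D.E, if D.tl a = v then 1 - R a else 0)) = ∑ v : D.V, (2 : ℝ) :=
      Finset.sum_congr rfl fun v _ => hvert v
    have h2 : ∀ (f : D.E → D.V),
        ∑ v : D.V, ∑ a : D.E, (if f a = v then 1 - R a else 0)
          = ∑ a : D.E, (1 - R a) := by
      intro f
      rw [Finset.sum_comm]
      exact Finset.sum_congr rfl fun a _ => by
        rw [Finset.sum_ite_eq Finset.univ (f a) (fun _ => 1 - R a)]
        simp
    rw [Finset.sum_add_distrib, h2 D.hd, h2 D.tl] at h1
    have : (2 : ℝ) * ∑ a : D.E, (1 - R a) = 2 * Nat.card D.V := by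
      rw [two_mul, h1, Finset.sum_const, Nat.card_eq_fintype_card, Finset.card_univ]
      simp [mul_comm]
    rw [← this, Finset.sum_sub_distrib, Finset.sum_const, Nat.card_eq_fintype_card,
      Finset.card_univ]
    ring_nf
  have key : (Nat.card D.V : ℝ) - Nat.card D.E + Nat.card ↥D.faces = 0 := by
    have hf : (Nat.card ↥D.faces : ℝ) = ∑ a : D.E, R a := by
      rw [hcardfaces]
      push_cast
      linarith [hsumP, hsumM]
    rw [hf]; linarith [hvsum]
  have : ((D.eulerChar : ℤ) : ℝ) = 0 := by
    rw [DimerData.eulerChar]; push_cast; linarith [key]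
  exact_mod_cast this
end
end

section
/- Let Q be a dimer model embedded in the plane with isoradial cycles (each face cycle inscribed in a unit circle, each arrow a subtending an arc of π·R_a radians) coming from a consistent R-charge. For a direction θ, let P_θ^+ be the set of arrows a such that the ray from the center of the positive cycle containing a in direction θ hits a but not in its head. Then P_θ^+ is a perfect matching: every cycle in Q_2 (both positive and negative) contains exactly one arrow of P_θ^+. -/
open scoped BigOperators

attribute [local instance] Classical.propDecidable

noncomputable section

namespace DimerData

/-- A realization of a (planar) dimer model with isoradial cycles coming from an
R-charge `R`: every face is a polygon inscribed in a unit circle around its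
center, positive faces anticlockwise and negative faces clockwise, with each
arrow `a` standing on an arc of `π R_a` radians. -/
structure Isoradial (D : DimerData) (R : D.E → ℝ) where
  pos : D.V → ℂ
  ctrP : List D.E → ℂ
  ctrM : List D.E → ℂ
  unitP : ∀ c ∈ D.facesP, ∀ a ∈ c, ‖pos (D.tl a) - ctrP c‖ = 1
  unitM : ∀ c ∈ D.facesM, ∀ a ∈ c, ‖pos (D.tl a) - ctrM c‖ = 1
  arcP : ∀ c ∈ D.facesP, ∀ a ∈ c,
    pos (D.hd a) - ctrP c =
      Complex.exp (((Real.pi * R a : ℝ) : ℂ) * Complex.I) * (pos (D.tl a) - ctrP c)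
  arcM : ∀ c ∈ D.facesM, ∀ a ∈ c,
    pos (D.hd a) - ctrM c =
      Complex.exp (-((Real.pi * R a : ℝ) : ℂ) * Complex.I) * (pos (D.tl a) - ctrM c)

/-- The set `P_θ⁺` of arrows `a` such that the ray from the center of the
positive face of `a` in direction `θ` hits `a`, but not in its head: the
direction `θ` lies on the arc going anticlockwise from the tail of `a`
(inclusive) to the head of `a` (exclusive). -/
def PosMatch (D : DimerData) {R : D.E → ℝ} (emb : Isoradial D R) (θ : ℝ) : Set D.E :=
  {a | ∃ c ∈ D.facesP, a ∈ c ∧ ∃ s : ℝ, 0 ≤ s ∧ s < Real.pi * R a ∧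
    Complex.exp ((θ : ℂ) * Complex.I) =
      Complex.exp ((s : ℂ) * Complex.I) * (emb.pos (D.tl a) - emb.ctrP c)}

end DimerData


open Complex in
private lemma aux_crossing (k : ℕ) (hk : 1 ≤ k) (B : ℕ → ℝ)
    (hmono : ∀ i j, i ≤ j → j ≤ k → B i ≤ B j)
    (htot : B k = B 0 + 2 * Real.pi) :
    ∃! i : ℕ, i < k ∧ ∃ m : ℤ, B i < 2 * Real.pi * m ∧ 2 * Real.pi * m ≤ B (i + 1) := by
  have hπ : (0:ℝ) < 2 * Real.pi := by positivity
  set m₀ : ℤ := ⌊B 0 / (2 * Real.pi)⌋ + 1 with hm₀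
  have hf1 := Int.lt_floor_add_one (B 0 / (2 * Real.pi))
  have hf2 := Int.floor_le (B 0 / (2 * Real.pi))
  have hdiv : B 0 = 2 * Real.pi * (B 0 / (2 * Real.pi)) := by field_simp
  have h1 : B 0 < 2 * Real.pi * m₀ := by
    rw [hdiv, hm₀]; push_cast
    have := (mul_lt_mul_iff_right₀ hπ).mpr hf1
    linarith
  have h2 : 2 * Real.pi * m₀ ≤ B k := by
    rw [htot, hm₀]; push_cast
    nlinarith [(mul_le_mul_iff_right₀ hπ).mpr hf2]
  have hex : ∃ i, 2 * Real.pi * m₀ ≤ B (i + 1) := ⟨k - 1, by rwa [Nat.sub_add_cancel hk]⟩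
  classical
  set i₀ := Nat.find hex with hi₀def
  have hi₀ : 2 * Real.pi * m₀ ≤ B (i₀ + 1) := Nat.find_spec hex
  have hi₀k : i₀ < k := by
    have : i₀ ≤ k - 1 := Nat.find_min' hex (by rwa [Nat.sub_add_cancel hk])
    omega
  have hlt : B i₀ < 2 * Real.pi * m₀ := by
    rcases Nat.eq_zero_or_pos i₀ with h | h
    · rw [h]; exact h1
    · have hm := Nat.find_min hex (show i₀ - 1 < i₀ by omega)
      push_neg at hm
      have : i₀ - 1 + 1 = i₀ := by omega
      rwa [this] at hm
  refine ⟨i₀, ⟨hi₀k, m₀, hlt, hi₀⟩, ?_⟩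
  rintro j ⟨hjk, m, hm1, hm2⟩
  by_contra hne
  have hB0j : B 0 ≤ B j := hmono 0 j (Nat.zero_le _) (le_of_lt hjk)
  have hBj1 : B (j+1) ≤ B k := hmono (j+1) k hjk le_rfl
  have hB0i : B 0 ≤ B i₀ := hmono 0 i₀ (Nat.zero_le _) (le_of_lt hi₀k)
  have hBi1 : B (i₀+1) ≤ B k := hmono (i₀+1) k hi₀k le_rfl
  have hmm : m = m₀ := by
    have l1 : B 0 < 2*Real.pi*m := lt_of_le_of_lt hB0j hm1
    have l2 : 2*Real.pi*m ≤ B 0 + 2*Real.pi := htot ▸ le_trans hm2 hBj1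
    have l3 : 2*Real.pi*(m₀:ℝ) ≤ B 0 + 2*Real.pi := htot ▸ le_trans hi₀ hBi1
    have l4 : B 0 < 2*Real.pi*m₀ := lt_of_le_of_lt hB0i hlt
    have c1 : (m : ℝ) < m₀ + 1 := by nlinarith
    have c2 : (m₀ : ℝ) < m + 1 := by nlinarith
    have : m < m₀ + 1 := by exact_mod_cast c1
    have : m₀ < m + 1 := by exact_mod_cast c2
    omega
  subst hmm
  rcases lt_or_gt_of_ne hne with h | h
  · have : B (j+1) ≤ B i₀ := hmono _ _ h (le_of_lt hi₀k)
    linarith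
  · have : B (i₀+1) ≤ B j := hmono _ _ h (le_of_lt hjk)
    linarith



private lemma aux_key (k : ℕ) (hk : 1 ≤ k) (α : ℕ → ℝ) (z : ℕ → ℂ) (W : ℂ)
    (hα : ∀ i < k, 0 < α i)
    (hsum : ∑ i ∈ Finset.range k, α i = 2 * Real.pi)
    (hz0 : ‖z 0‖ = 1) (hW : ‖W‖ = 1)
    (hrel : ∀ i, i + 1 < k → z i = Complex.exp ((α (i+1) : ℂ) * Complex.I) * z (i+1))
    (crossing : ∀ (B : ℕ → ℝ), (∀ i j, i ≤ j → j ≤ k → B i ≤ B j) →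
      B k = B 0 + 2 * Real.pi →
      ∃! i : ℕ, i < k ∧ ∃ m : ℤ, B i < 2 * Real.pi * m ∧ 2 * Real.pi * m ≤ B (i + 1)) :
    ∃! i : ℕ, i < k ∧ ∃ s : ℝ, 0 ≤ s ∧ s < α i ∧
      W = Complex.exp ((s:ℂ) * Complex.I) * z i := by
  classical
  set S : ℕ → ℝ := fun i => ∑ t ∈ Finset.range i, α t with hS
  have hSmono : ∀ i j : ℕ, i ≤ j → j ≤ k → S i ≤ S j := by
    intro i j hij hjk
    exact Finset.sum_le_sum_of_subset_of_nonneg (Finset.range_subset_range.2 hij)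
      (fun t ht _ => (hα t (lt_of_lt_of_le (Finset.mem_range.1 ht) hjk)).le)
  have hSsucc : ∀ i, S (i+1) = S i + α i := fun i => Finset.sum_range_succ α i
  set u : ℂ := Complex.exp ((α 0 : ℂ) * Complex.I) * z 0 with hu
  have hu1 : ‖u‖ = 1 := by
    rw [hu, norm_mul, Complex.norm_exp_ofReal_mul_I, hz0, one_mul]
  have hune : u ≠ 0 := by
    intro h; rw [h] at hu1; simp at hu1
  have hzi : ∀ i, i < k → z i = Complex.exp ((-(S (i+1)) : ℝ) * Complex.I) * u := by
    intro i
    induction i with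
    | zero =>
      intro _
      have h1 : S 1 = α 0 := by simp [hS]
      rw [hu, ← mul_assoc, ← Complex.exp_add]
      have : ((-(S 1) : ℝ) : ℂ) * Complex.I + (α 0 : ℂ) * Complex.I = 0 := by
        rw [h1]; push_cast; ring
      rw [this, Complex.exp_zero, one_mul]
    | succ n ih =>
      intro h
      have hn : n < k := by omega
      have hr := hrel n h
      have hzn1 : z (n+1) = Complex.exp (-((α (n+1) : ℂ) * Complex.I)) * z n := by
        rw [hr, ← mul_assoc, ← Complex.exp_add, neg_add_cancel, Complex.exp_zero, one_mul]
      rw [hzn1, ih hn, ← mul_assoc, ← Complex.exp_add]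
      congr 1
      have : S (n+1+1) = S (n+1) + α (n+1) := hSsucc (n+1)
      rw [this]; push_cast; ring
  set ψ : ℝ := (W / u).arg with hψ
  have hWu : W = Complex.exp ((ψ : ℂ) * Complex.I) * u := by
    have habs : ‖W / u‖ = 1 := by rw [norm_div, hW, hu1, div_one]
    have := Complex.norm_mul_exp_arg_mul_I (W / u)
    rw [habs, Complex.ofReal_one, one_mul] at this
    rw [← hψ] at this
    field_simp [hune] at this ⊢
    rw [this]
  set B : ℕ → ℝ := fun i => S i + ψ with hB
  have hBmono : ∀ i j, i ≤ j → j ≤ k → B i ≤ B j := by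
    intro i j h1 h2; simp only [hB]; linarith [hSmono i j h1 h2]
  have hBtot : B k = B 0 + 2 * Real.pi := by
    simp only [hB, hS]; rw [hsum]; simp; ring
  have hiff : ∀ i, i < k →
      ((∃ s : ℝ, 0 ≤ s ∧ s < α i ∧ W = Complex.exp ((s:ℂ) * Complex.I) * z i) ↔
        (∃ m : ℤ, B i < 2 * Real.pi * m ∧ 2 * Real.pi * m ≤ B (i + 1))) := by
    intro i hik
    constructor
    · rintro ⟨s, hs0, hsα, hsW⟩
      rw [hzi i hik, ← mul_assoc, ← Complex.exp_add] at hsW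
      rw [hWu] at hsW
      have hcancel : Complex.exp ((ψ : ℂ) * Complex.I) =
          Complex.exp ((s : ℂ) * Complex.I + ((-(S (i+1)) : ℝ) : ℂ) * Complex.I) :=
        mul_right_cancel₀ hune hsW
      rw [Complex.exp_eq_exp_iff_exists_int] at hcancel
      obtain ⟨n, hn⟩ := hcancel
      have him := congrArg Complex.im hn
      simp [Complex.add_im, Complex.mul_im] at him
      -- him : ψ = s + (-(S (i+1)) + n * (2 * π))  (roughly)
      refine ⟨n, ?_, ?_⟩
      · have : α i = S (i+1) - S i := by rw [hSsucc]; ring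
        simp only [hB]; nlinarith [him]
      · simp only [hB]; nlinarith [him]
    · rintro ⟨m, hm1, hm2⟩
      refine ⟨B (i+1) - 2 * Real.pi * m, by linarith, ?_, ?_⟩
      · have : α i = S (i+1) - S i := by rw [hSsucc]; ring
        simp only [hB] at hm1 ⊢; linarith
      · rw [hzi i hik, ← mul_assoc, ← Complex.exp_add, hWu]
        congr 1
        have : ((B (i+1) - 2 * Real.pi * m : ℝ) : ℂ) * Complex.I +
            ((-(S (i+1)) : ℝ) : ℂ) * Complex.I =
            (ψ : ℂ) * Complex.I + (-m : ℤ) * (2 * (Real.pi : ℂ) * Complex.I) := by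
          simp only [hB]; push_cast; ring
        rw [this, Complex.exp_add, Complex.exp_int_mul_two_pi_mul_I, mul_one]
  obtain ⟨i, ⟨hik, hmi⟩, huniq⟩ := crossing B hBmono hBtot
  refine ⟨i, ⟨hik, (hiff i hik).2 hmi⟩, ?_⟩
  rintro j ⟨hjk, hs⟩
  exact huniq j ⟨hjk, (hiff j hjk).1 hs⟩

private lemma aux_face_unique (D : DimerData) (hD : D.IsDimer) {a : D.E} {c c' : List D.E}
    (hc : c ∈ D.facesP) (hc' : c' ∈ D.facesP) (ha : a ∈ c) (ha' : a ∈ c') : c = c' := by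
  obtain ⟨s, t, hst⟩ := List.append_of_mem ha
  obtain ⟨s', t', hst'⟩ := List.append_of_mem ha'
  obtain ⟨p, -, hup⟩ := hD.arrowP a
  have h1 : (s, t) = p := hup (s, t) (show s ++ a :: t ∈ D.facesP by rw [← hst]; exact hc)
  have h2 : (s', t') = p := hup (s', t') (show s' ++ a :: t' ∈ D.facesP by rw [← hst']; exact hc')
  have h3 := h1.trans h2.symm
  injection h3 with hs ht
  rw [hst, hst', hs, ht]

private lemma aux_Rlt2 (D : DimerData) (hD : D.IsDimer) {R : D.E → ℝ}
    (hpos : ∀ a : D.E, 0 < R a) (hface : ∀ c ∈ D.faces, (c.map R).sum = 2)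
    {a : D.E} {cp : List D.E} (hcp : cp ∈ D.facesP) (hap : a ∈ cp) : R a < 2 := by
  obtain ⟨s, t, rfl⟩ := List.append_of_mem hap
  have hsum := hface _ (Or.inl hcp)
  rw [List.map_append, List.sum_append, List.map_cons, List.sum_cons] at hsum
  have hlen := (hD.facesP_cyc _ hcp).2
  rw [List.length_append, List.length_cons] at hlen
  have hs : 0 ≤ (s.map R).sum := List.sum_nonneg (by
    intro x hx; obtain ⟨b, -, rfl⟩ := List.mem_map.1 hx; exact (hpos b).le)
  have ht : 0 ≤ (t.map R).sum := List.sum_nonneg (by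
    intro x hx; obtain ⟨b, -, rfl⟩ := List.mem_map.1 hx; exact (hpos b).le)
  have hone : s ≠ [] ∨ t ≠ [] := by
    by_contra hcon
    push_neg at hcon
    rcases hcon with ⟨rfl, rfl⟩
    simp at hlen
  have hposl : ∀ l : List D.E, l ≠ [] → 0 < (l.map R).sum := by
    intro l hl
    refine List.sum_pos _ (by
      intro x hx; obtain ⟨b, -, rfl⟩ := List.mem_map.1 hx; exact hpos b) (by
      simpa using hl)
  rcases hone with h | h
  · have := hposl s h; linarith
  · have := hposl t h; linarith

private lemma aux_exp_ne_one {r : ℝ} (h0 : 0 < r) (h2 : r < 2) :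
    Complex.exp (-((Real.pi * r : ℝ) : ℂ) * Complex.I) ≠ 1 := by
  rw [Ne, Complex.exp_eq_one_iff]
  rintro ⟨n, hn⟩
  have him := congrArg Complex.im hn
  simp [Complex.mul_im] at him
  -- him : -(π * r) = n * (2 * π)  (roughly)
  have hπ := Real.pi_pos
  have hr : r = -2 * n := by nlinarith
  rcases le_or_gt n 0 with h | h
  · rcases eq_or_lt_of_le h with rfl | h
    · simp at hr; nlinarith
    · have hn1 : n ≤ -1 := by omega
      have : (n : ℝ) ≤ -1 := by exact_mod_cast hn1
      nlinarith
  · have : (1 : ℝ) ≤ n := by exact_mod_cast h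
    nlinarith

/-- The reflection relation: for `a` in a negative face `c` with positive face `cp`,
the tail of `a` seen from `ctrP cp` is the antipode of the head of `a` seen from `ctrM c`. -/
private lemma aux_reflect (D : DimerData) (hD : D.IsDimer) {R : D.E → ℝ}
    (hpos : ∀ a : D.E, 0 < R a) (hface : ∀ c ∈ D.faces, (c.map R).sum = 2)
    (emb : DimerData.Isoradial D R) {a : D.E} {c cp : List D.E}
    (hcM : c ∈ D.facesM) (hcp : cp ∈ D.facesP) (ha : a ∈ c) (hap : a ∈ cp) :
    emb.pos (D.tl a) - emb.ctrP cp = -(emb.pos (D.hd a) - emb.ctrM c) := by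
  set x := emb.pos (D.tl a) - emb.ctrP cp with hx
  set y := emb.pos (D.tl a) - emb.ctrM c with hy
  set e := Complex.exp (((Real.pi * R a : ℝ) : ℂ) * Complex.I) with he
  have hene : e ≠ 0 := Complex.exp_ne_zero _
  have heinv : Complex.exp (-((Real.pi * R a : ℝ) : ℂ) * Complex.I) = e⁻¹ := by
    rw [he, ← Complex.exp_neg]; ring_nf
  have hP := emb.arcP cp hcp a hap
  have hM := emb.arcM c hcM a ha
  rw [heinv] at hM
  -- chord equality
  have hchord : e * x - x = e⁻¹ * y - y := by
    rw [hx, hy, ← hP, ← hM]; ring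
  have hee : e⁻¹ * e = 1 := inv_mul_cancel₀ hene
  have hnum : (e⁻¹ - 1) * y = (e⁻¹ - 1) * (-e * x) := by
    linear_combination -hchord + x * hee
  have hne1 : e⁻¹ - 1 ≠ 0 := by
    rw [← heinv]
    exact sub_ne_zero.2 (aux_exp_ne_one (hpos a)
      (aux_Rlt2 D hD hpos hface hcp hap))
  have hy2 : y = -e * x := mul_left_cancel₀ hne1 hnum
  -- conclude
  have hMy : emb.pos (D.hd a) - emb.ctrM c = e⁻¹ * y := hM
  rw [hMy, hy2]
  linear_combination (-x) * hee

private lemma aux_posMatch_iff (D : DimerData) (hD : D.IsDimer) {R : D.E → ℝ}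
    (emb : DimerData.Isoradial D R) (θ : ℝ) {a : D.E} {c : List D.E}
    (hc : c ∈ D.facesP) (ha : a ∈ c) :
    a ∈ DimerData.PosMatch D emb θ ↔ ∃ s : ℝ, 0 ≤ s ∧ s < Real.pi * R a ∧
      Complex.exp ((θ : ℂ) * Complex.I) =
        Complex.exp ((s : ℂ) * Complex.I) * (emb.pos (D.tl a) - emb.ctrP c) := by
  constructor
  · rintro ⟨c', hc', ha', hs⟩
    rwa [aux_face_unique D hD hc' hc ha' ha] at hs
  · intro hs
    exact ⟨c, hc, ha, hs⟩

private lemma aux_arcM_rev (D : DimerData) {R : D.E → ℝ} (emb : DimerData.Isoradial D R)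
    {c : List D.E} (hcM : c ∈ D.facesM) {a : D.E} (ha : a ∈ c) :
    emb.pos (D.tl a) - emb.ctrM c =
      Complex.exp (((Real.pi * R a : ℝ) : ℂ) * Complex.I) * (emb.pos (D.hd a) - emb.ctrM c) := by
  rw [emb.arcM c hcM a ha, ← mul_assoc, ← Complex.exp_add,
    show ((Real.pi * R a : ℝ) : ℂ) * Complex.I + -((Real.pi * R a : ℝ) : ℂ) * Complex.I = 0
      by ring, Complex.exp_zero, one_mul]

open DimerData in
/-- For a dimer model embedded with isoradial cycles and any
direction `θ`, the set `P_θ⁺` is a perfect matching: every face (positive and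
negative) contains exactly one arrow of `P_θ⁺`. -/
theorem posMatch_isPM (D : DimerData) (hD : D.IsDimer) (R : D.E → ℝ)
    (hpos : ∀ a : D.E, 0 < R a) (hface : ∀ c ∈ D.faces, (c.map R).sum = 2)
    (emb : Isoradial D R) (θ : ℝ) :
    ∀ c ∈ D.faces, ∃! a : D.E, a ∈ c ∧ a ∈ PosMatch D emb θ := by
  intro c hc
  have hπ := Real.pi_pos
  have hWabs : ‖Complex.exp ((θ : ℂ) * Complex.I)‖ = 1 :=
    Complex.norm_exp_ofReal_mul_I θ
  rcases hc with hcP | hcM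
  · -- positive face
    obtain ⟨⟨hchain, -⟩, hlen⟩ := hD.facesP_cyc c hcP
    have h0 : 0 < c.length := by omega
    have hk1 : 1 ≤ c.length := h0
    set g : ℕ → D.E := fun i => if h : i < c.length then c.get ⟨i, h⟩ else c.get ⟨0, h0⟩
      with hg
    have hgget : ∀ (i : ℕ) (h : i < c.length), g i = c.get ⟨i, h⟩ := fun i h => dif_pos h
    have hgmem : ∀ i, i < c.length → g i ∈ c := by
      intro i h; rw [hgget i h]; exact List.get_mem c _
    set α : ℕ → ℝ := fun i => Real.pi * R (g i) with hα
    set z : ℕ → ℂ := fun i => emb.pos (D.tl (g i)) - emb.ctrP c with hz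
    have hαpos : ∀ i, i < c.length → 0 < α i := fun i _ => mul_pos hπ (hpos _)
    have hsum : ∑ i ∈ Finset.range c.length, α i = 2 * Real.pi := by
      calc ∑ i ∈ Finset.range c.length, α i
          = ∑ i : Fin c.length, α i.1 := (Fin.sum_univ_eq_sum_range _ _).symm
        _ = ∑ i : Fin c.length, Real.pi * R (c.get i) := by
            refine Finset.sum_congr rfl fun i _ => ?_
            simp only [hα]; rw [hgget i.1 i.2]
        _ = Real.pi * ∑ i : Fin c.length, R (c.get i) := by rw [Finset.mul_sum]
        _ = Real.pi * (c.map R).sum := by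
            congr 1
            rw [← Fin.sum_univ_fun_getElem c R]
            exact Finset.sum_congr rfl fun i _ => by rw [List.get_eq_getElem]
        _ = 2 * Real.pi := by rw [hface c (Or.inl hcP)]; ring
    have hz0 : ‖z 0‖ = 1 := emb.unitP c hcP _ (hgmem 0 h0)
    have hrel : ∀ i, i + 1 < c.length →
        z i = Complex.exp ((α (i+1) : ℂ) * Complex.I) * z (i+1) := by
      intro i hi
      simp only [hz, hα]
      rw [hgget i (by omega), hgget (i+1) hi]
      have hchain' : D.tl (c.get ⟨i, by omega⟩) = D.hd (c.get ⟨i+1, hi⟩) :=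
        List.isChain_iff_getElem.1 hchain i (by omega)
      rw [hchain']
      exact emb.arcP c hcP _ (List.get_mem c _)
    obtain ⟨i₀, ⟨hi₀k, s, hs0, hsα, hsW⟩, huniq⟩ :=
      aux_key c.length hk1 α z (Complex.exp ((θ : ℂ) * Complex.I)) hαpos hsum hz0 hWabs hrel
        (fun B hm ht => aux_crossing c.length hk1 B hm ht)
    refine ⟨g i₀, ⟨hgmem i₀ hi₀k, ?_⟩, ?_⟩
    · exact ⟨c, hcP, hgmem i₀ hi₀k, s, hs0, hsα, hsW⟩
    · rintro a' ⟨ha'c, ha'm⟩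
      obtain ⟨j, hj⟩ := List.mem_iff_get.1 ha'c
      obtain ⟨s', hs'0, hs'α, hs'W⟩ := (aux_posMatch_iff D hD emb θ hcP ha'c).1 ha'm
      have hgj : g j.1 = a' := by rw [hgget j.1 j.2]; exact hj
      have hji : j.1 = i₀ := by
        refine huniq j.1 ⟨j.2, s', hs'0, ?_, ?_⟩
        · simpa only [hα, hgj] using hs'α
        · simpa only [hz, hgj] using hs'W
      rw [← hgj, hji]
  · -- negative face
    obtain ⟨⟨hchain, -⟩, hlen⟩ := hD.facesM_cyc c hcM
    have h0 : 0 < c.length := by omega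
    have hk1 : 1 ≤ c.length := h0
    set g : ℕ → D.E := fun i => if h : i < c.length then c.get ⟨i, h⟩ else c.get ⟨0, h0⟩
      with hg
    have hgget : ∀ (i : ℕ) (h : i < c.length), g i = c.get ⟨i, h⟩ := fun i h => dif_pos h
    have hgmem : ∀ i, i < c.length → g i ∈ c := by
      intro i h; rw [hgget i h]; exact List.get_mem c _
    have hpface : ∀ a : D.E, ∃ cp ∈ D.facesP, a ∈ cp := by
      intro a
      obtain ⟨⟨s, t⟩, hst, -⟩ := hD.arrowP a
      exact ⟨s ++ a :: t, hst, by simp⟩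
    choose cp hcpP hcpMem using hpface
    set αn : ℕ → ℝ := fun j => Real.pi * R (g (c.length - 1 - j)) with hαn
    set zn : ℕ → ℂ := fun j => emb.pos (D.hd (g (c.length - 1 - j))) - emb.ctrM c with hzn
    have hαpos : ∀ j, j < c.length → 0 < αn j := fun j _ => mul_pos hπ (hpos _)
    have habsM : ∀ a ∈ c, ‖emb.pos (D.hd a) - emb.ctrM c‖ = 1 := by
      intro a ha
      rw [emb.arcM c hcM a ha, norm_mul,
        show -((Real.pi * R a : ℝ) : ℂ) * Complex.I = ((-(Real.pi * R a) : ℝ) : ℂ) * Complex.I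
          by push_cast; ring,
        Complex.norm_exp_ofReal_mul_I, emb.unitM c hcM a ha, one_mul]
    have hz0 : ‖zn 0‖ = 1 := habsM _ (hgmem _ (by omega))
    have hsumg : ∑ i ∈ Finset.range c.length, Real.pi * R (g i) = 2 * Real.pi := by
      calc ∑ i ∈ Finset.range c.length, Real.pi * R (g i)
          = ∑ i : Fin c.length, Real.pi * R (g i.1) := (Fin.sum_univ_eq_sum_range _ _).symm
        _ = ∑ i : Fin c.length, Real.pi * R (c.get i) := by
            refine Finset.sum_congr rfl fun i _ => ?_
            rw [hgget i.1 i.2]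
        _ = Real.pi * ∑ i : Fin c.length, R (c.get i) := by rw [Finset.mul_sum]
        _ = Real.pi * (c.map R).sum := by
            congr 1
            rw [← Fin.sum_univ_fun_getElem c R]
            exact Finset.sum_congr rfl fun i _ => by rw [List.get_eq_getElem]
        _ = 2 * Real.pi := by rw [hface c (Or.inr hcM)]; ring
    have hsum : ∑ j ∈ Finset.range c.length, αn j = 2 * Real.pi := by
      have hr := Finset.sum_range_reflect (fun i => Real.pi * R (g i)) c.length
      simp only [hαn]
      rw [hr]
      exact hsumg
    have hrel : ∀ j, j + 1 < c.length →
        zn j = Complex.exp ((αn (j+1) : ℂ) * Complex.I) * zn (j+1) := by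
      intro j hj
      simp only [hzn, hαn]
      have e1 : c.length - 1 - j = (c.length - 1 - (j+1)) + 1 := by omega
      rw [e1]
      have hik : (c.length - 1 - (j+1)) + 1 < c.length := by omega
      have hik' : c.length - 1 - (j+1) < c.length := by omega
      rw [hgget _ hik, hgget _ hik']
      have hchain' : D.tl (c.get ⟨c.length - 1 - (j+1), hik'⟩) =
          D.hd (c.get ⟨(c.length - 1 - (j+1)) + 1, hik⟩) :=
        List.isChain_iff_getElem.1 hchain _ (by omega)
      rw [← hchain']
      exact aux_arcM_rev D emb hcM (List.get_mem c _)
    obtain ⟨j₀, ⟨hj₀k, s, hs0, hsα, hsW⟩, huniq⟩ :=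
      aux_key c.length hk1 αn zn (-Complex.exp ((θ : ℂ) * Complex.I)) hαpos hsum hz0
        (by rw [norm_neg]; exact hWabs) hrel
        (fun B hm ht => aux_crossing c.length hk1 B hm ht)
    -- translation between the key condition and PosMatch
    have htrans : ∀ i, i < c.length →
        ((∃ s : ℝ, 0 ≤ s ∧ s < Real.pi * R (g i) ∧
          -Complex.exp ((θ : ℂ) * Complex.I) =
            Complex.exp ((s : ℂ) * Complex.I) * (emb.pos (D.hd (g i)) - emb.ctrM c)) ↔
          g i ∈ PosMatch D emb θ) := by
      intro i hik
      have hrefl := aux_reflect D hD hpos hface emb hcM (hcpP (g i)) (hgmem i hik)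
        (hcpMem (g i))
      rw [aux_posMatch_iff D hD emb θ (hcpP (g i)) (hcpMem (g i))]
      constructor
      · rintro ⟨s', h1, h2, h3⟩
        refine ⟨s', h1, h2, ?_⟩
        rw [hrefl]
        linear_combination -h3
      · rintro ⟨s', h1, h2, h3⟩
        refine ⟨s', h1, h2, ?_⟩
        rw [hrefl] at h3
        linear_combination -h3
    have hj₀i : c.length - 1 - j₀ < c.length := by omega
    refine ⟨g (c.length - 1 - j₀), ⟨hgmem _ hj₀i, ?_⟩, ?_⟩
    · exact (htrans _ hj₀i).1 ⟨s, hs0, hsα, hsW⟩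
    · rintro a' ⟨ha'c, ha'm⟩
      obtain ⟨j, hj⟩ := List.mem_iff_get.1 ha'c
      have hgj : g j.1 = a' := by rw [hgget j.1 j.2]; exact hj
      have hidx : c.length - 1 - (c.length - 1 - j.1) = j.1 := by omega
      have hkey : c.length - 1 - j.1 = j₀ := by
        refine huniq (c.length - 1 - j.1) ⟨by omega, ?_⟩
        have := (htrans j.1 j.2).2 (by rw [hgj]; exact ha'm)
        obtain ⟨s', h1, h2, h3⟩ := this
        exact ⟨s', h1, by simpa only [hαn, hidx] using h2, by simpa only [hzn, hidx] using h3⟩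
      rw [← hgj, ← hkey, hidx]
end
end
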